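/- Let Γ = A*_φ and let γ ∈ Γ be cyclically reduced. If γ is conjugate in Γ to a cyclically reduced element γ' with reduced form u_1 t^{μ_1} u_2 t^{μ_2} ⋯ u_m t^{μ_m} with m ≥ 1, then there exists an index r with 1 ≤ r ≤ m such that γ can be obtained by conjugating the cyclic conjugate u_{r+1} t^{μ_{r+1}} ⋯ u_m t^{μ_m} u_1 t^{μ_1} ⋯ u_r t^{μ_r} of γ' by an element of C_{μ_r}. -/

import Mathlib

/-!
Internal characterization of the HNN extension `Γ = A*_φ`:
`A` is a subgroup of `Γ`, `t ∈ Γ` is the stable letter, `Cm = C_{-1}` and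
`Cp = C_{+1}` are subgroups of `A` with `t⁻¹ Cm t = Cp` (so
`φ(c) = t⁻¹ c t` for `c ∈ Cm`), `A ∪ {t}` generates `Γ`, and Britton's lemma
holds: a reduced word `g₀ t^{ε₁} g₁ ⋯ t^{εₙ} gₙ` with `n ≥ 1` is nontrivial.
-/

variable {Γ : Type*} [Group Γ]

/-- The subgroup `C_ε` : `C_{+1} = Cp` when `ε = 1`, and `C_{-1} = Cm`
otherwise. -/
def toCsub (Cm Cp : Subgroup Γ) (ε : ℤ) : Subgroup Γ := if ε = 1 then Cp else Cm

/-- The pair `(g₀, [(ε₁, g₁), …, (εₙ, gₙ)])` encodes the word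
`g₀ t^{ε₁} g₁ ⋯ t^{εₙ} gₙ`; it is reduced when all `gᵢ ∈ A`, all `εᵢ = ±1`,
and it contains no pinch `t^{εᵢ} gᵢ t^{-εᵢ}` with `gᵢ ∈ C_{εᵢ}`. -/
def HNNReducedWord (A Cm Cp : Subgroup Γ) (g₀ : Γ) (w : List (ℤ × Γ)) : Prop :=
  g₀ ∈ A ∧ (∀ p ∈ w, (p.1 = 1 ∨ p.1 = -1) ∧ p.2 ∈ A) ∧
    w.Chain' fun p q => q.1 = -p.1 → p.2 ∉ toCsub Cm Cp p.1

/-- The element of `Γ` represented by the word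
`g₀ t^{ε₁} g₁ ⋯ t^{εₙ} gₙ`. -/
def hnnProd (t g₀ : Γ) (w : List (ℤ × Γ)) : Γ :=
  g₀ * (w.map fun p => t ^ p.1 * p.2).prod

/-- `Γ` is the HNN extension of its subgroup `A` relative to the isomorphism
`φ : Cm → Cp`, `φ(c) = t⁻¹ c t`, with stable letter `t`. -/
def IsHNN (A Cm Cp : Subgroup Γ) (t : Γ) : Prop :=
  Cm ≤ A ∧ Cp ≤ A ∧ (∀ c : Γ, c ∈ Cm ↔ t⁻¹ * c * t ∈ Cp) ∧
    Subgroup.closure ((A : Set Γ) ∪ {t}) = ⊤ ∧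
    ∀ g₀ w, HNNReducedWord A Cm Cp g₀ w → w ≠ [] → hnnProd t g₀ w ≠ 1

/-- `g` is cyclically reduced: `g ∈ A` (length 1), or `g` has a reduced form
`g₁ t^{ε₁} g₂ ⋯ gₙ t^{εₙ} gₙ₊₁` with `gₙ₊₁ = 1` and either `n = 1` or
`t^{εₙ} g₁ t^{ε₁}` is not a pinch. -/
def HNNCyclicallyReduced (A Cm Cp : Subgroup Γ) (t g : Γ) : Prop :=
  g ∈ A ∨
    ∃ g₀ w, HNNReducedWord A Cm Cp g₀ w ∧ hnnProd t g₀ w = g ∧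
      ∃ p q, w.head? = some q ∧ w.getLast? = some p ∧ p.2 = 1 ∧
        (w.length = 1 ∨ ¬(q.1 = -p.1 ∧ g₀ ∈ toCsub Cm Cp p.1))

namespace HNNAux

/-- chain relation for reduced words -/
def Rrel (Cm Cp : Subgroup Γ) (p q : ℤ × Γ) : Prop :=
  q.1 = -p.1 → p.2 ∉ toCsub Cm Cp p.1

/-- chain relation for cyclic words (blocks `u t^μ`) -/
def Srel (Cm Cp : Subgroup Γ) (p q : ℤ × Γ) : Prop :=
  q.1 = -p.1 → q.2 ∉ toCsub Cm Cp p.1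

def Ent (A : Subgroup Γ) (w : List (ℤ × Γ)) : Prop :=
  ∀ p ∈ w, (p.1 = 1 ∨ p.1 = -1) ∧ p.2 ∈ A

def bprod (t : Γ) (w : List (ℤ × Γ)) : Γ := (w.map fun p => t ^ p.1 * p.2).prod

def blockProd (t : Γ) (L : List (ℤ × Γ)) : Γ := (L.map fun p => p.2 * t ^ p.1).prod

@[simp] lemma bprod_nil (t : Γ) : bprod t [] = 1 := rfl

lemma bprod_cons (t : Γ) (p : ℤ × Γ) (w : List (ℤ × Γ)) :
    bprod t (p :: w) = t ^ p.1 * p.2 * bprod t w := by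
  simp [bprod]

lemma bprod_append (t : Γ) (v w : List (ℤ × Γ)) :
    bprod t (v ++ w) = bprod t v * bprod t w := by
  simp [bprod]

lemma hnnProd_eq (t g₀ : Γ) (w : List (ℤ × Γ)) :
    hnnProd t g₀ w = g₀ * bprod t w := rfl

@[simp] lemma blockProd_nil (t : Γ) : blockProd t ([] : List (ℤ × Γ)) = 1 := rfl

lemma blockProd_cons (t : Γ) (p : ℤ × Γ) (L : List (ℤ × Γ)) :
    blockProd t (p :: L) = p.2 * t ^ p.1 * blockProd t L := by
  simp [blockProd]

lemma blockProd_append (t : Γ) (v w : List (ℤ × Γ)) :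
    blockProd t (v ++ w) = blockProd t v * blockProd t w := by
  simp [blockProd]

lemma Rrel_congr {Cm Cp : Subgroup Γ} {p q q' : ℤ × Γ} (h : q.1 = q'.1) :
    Rrel Cm Cp p q → Rrel Cm Cp p q' := by
  intro hr hq; exact hr (h ▸ hq)

lemma toCsub_le {A Cm Cp : Subgroup Γ} (h1 : Cm ≤ A) (h2 : Cp ≤ A) (ε : ℤ) :
    toCsub Cm Cp ε ≤ A := by
  unfold toCsub; split <;> assumption

lemma toCsub_neg_eq {Cm Cp : Subgroup Γ} {ε δ : ℤ} (h : δ = -ε) :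
    toCsub Cm Cp (-δ) = toCsub Cm Cp ε := by rw [h, neg_neg]

lemma pinch_mem {A Cm Cp : Subgroup Γ} {t : Γ} (hH : IsHNN A Cm Cp t)
    {ε : ℤ} (hε : ε = 1 ∨ ε = -1) {b : Γ} (hb : b ∈ toCsub Cm Cp ε) :
    t ^ ε * b * t ^ (-ε) ∈ toCsub Cm Cp (-ε) := by
  obtain ⟨-, -, hφ, -, -⟩ := hH
  rcases hε with h | h <;> subst h
  · have : b ∈ Cp := by simpa [toCsub] using hb
    have : t * b * t⁻¹ ∈ Cm := by
      rw [hφ]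
      convert this using 1
      group
    simpa [toCsub] using this
  · have hb' : b ∈ Cm := by simpa [toCsub] using hb
    have : t⁻¹ * b * t ∈ Cp := (hφ b).1 hb'
    simpa [toCsub] using this

/-- multiply the last coefficient on the right by `b` -/
def mulLast (b : Γ) : List (ℤ × Γ) → List (ℤ × Γ)
  | [] => []
  | [p] => [(p.1, p.2 * b)]
  | p :: q :: r => p :: mulLast b (q :: r)

@[simp] lemma mulLast_length (b : Γ) : ∀ w : List (ℤ × Γ), (mulLast b w).length = w.length
  | [] => rfl
  | [_] => rfl
  | p :: q :: r => by
    simpa [mulLast] using mulLast_length b (q :: r)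

lemma mulLast_map_fst (b : Γ) : ∀ w : List (ℤ × Γ),
    (mulLast b w).map Prod.fst = w.map Prod.fst
  | [] => rfl
  | [_] => rfl
  | p :: q :: r => by
    simpa [mulLast] using mulLast_map_fst b (q :: r)

lemma mulLast_concat (b : Γ) (p : ℤ × Γ) : ∀ w : List (ℤ × Γ),
    mulLast b (w ++ [p]) = w ++ [(p.1, p.2 * b)]
  | [] => rfl
  | [q] => rfl
  | q :: q' :: r => by
    have := mulLast_concat b p (q' :: r)
    simpa [mulLast] using this

lemma getLast?_mulLast (b : Γ) : ∀ w : List (ℤ × Γ),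
    (mulLast b w).getLast? = w.getLast?.map (fun p => (p.1, p.2 * b))
  | [] => rfl
  | [_] => rfl
  | p :: q :: r => by
    have hne : mulLast b (q :: r) ≠ [] := by
      simp [← List.length_pos_iff_ne_nil]
    have h1 : (p :: mulLast b (q :: r)).getLast? = (mulLast b (q :: r)).getLast? := by
      cases hm : mulLast b (q :: r) with
      | nil => exact absurd hm hne
      | cons x xs => rw [List.getLast?_cons_cons]
    rw [mulLast, h1, getLast?_mulLast b (q :: r), List.getLast?_cons_cons]

lemma head?_fst_mulLast (b : Γ) (w : List (ℤ × Γ)) :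
    ((mulLast b w).head?).map Prod.fst = (w.head?).map Prod.fst := by
  have := congrArg List.head? (mulLast_map_fst b w)
  simpa [List.head?_map] using this

lemma bprod_mulLast (t b : Γ) : ∀ w : List (ℤ × Γ), w ≠ [] →
    bprod t (mulLast b w) = bprod t w * b
  | [], h => absurd rfl h
  | [p], _ => by simp [mulLast, bprod, mul_assoc]
  | p :: q :: r, _ => by
    have := bprod_mulLast t b (q :: r) (by simp)
    simp only [mulLast, bprod_cons, this, mul_assoc]

lemma chain'_mulLast {Cm Cp : Subgroup Γ} (b : Γ) : ∀ w : List (ℤ × Γ),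
    w.Chain' (Rrel Cm Cp) → (mulLast b w).Chain' (Rrel Cm Cp)
  | [], _ => List.isChain_nil
  | [p], _ => List.isChain_singleton _
  | p :: q :: r, h => by
    simp only [List.Chain', List.isChain_cons_cons] at h
    have hrest := chain'_mulLast b (q :: r) h.2
    rw [mulLast]
    cases r with
    | nil =>
      exact List.isChain_cons_cons.2 ⟨Rrel_congr rfl h.1, hrest⟩
    | cons x xs =>
      rw [mulLast] at hrest ⊢
      exact List.isChain_cons_cons.2 ⟨h.1, hrest⟩

lemma ent_mulLast {A : Subgroup Γ} {b : Γ} (hb : b ∈ A) : ∀ w : List (ℤ × Γ),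
    Ent A w → Ent A (mulLast b w)
  | [], h => h
  | [p], h => by
    intro x hx
    simp [mulLast] at hx
    subst hx
    have := h p (by simp)
    exact ⟨this.1, mul_mem this.2 hb⟩
  | p :: q :: r, h => by
    intro x hx
    rw [mulLast] at hx
    rcases List.mem_cons.1 hx with rfl | hx
    · exact h x (by simp)
    · exact ent_mulLast hb (q :: r) (fun y hy => h y (List.mem_cons_of_mem _ hy)) x hx

/-- append an `A`-letter to a word -/
def mulLastP (g : Γ) (w : List (ℤ × Γ)) (b : Γ) : Γ × List (ℤ × Γ) :=
  match w with
  | [] => (g * b, [])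
  | p :: r => (g, mulLast b (p :: r))

lemma mulLastP_prod (t g b : Γ) (w : List (ℤ × Γ)) :
    (mulLastP g w b).1 * bprod t (mulLastP g w b).2 = g * bprod t w * b := by
  cases w with
  | nil => simp [mulLastP, bprod]
  | cons p r =>
    simp only [mulLastP]
    rw [bprod_mulLast t b (p :: r) (by simp), mul_assoc]

lemma mulLastP_length (g b : Γ) (w : List (ℤ × Γ)) :
    (mulLastP g w b).2.length = w.length := by
  cases w with
  | nil => rfl
  | cons p r => simp [mulLastP]

lemma mulLastP_mem {A : Subgroup Γ} {g b : Γ} (hg : g ∈ A) (hb : b ∈ A)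
    (w : List (ℤ × Γ)) : (mulLastP g w b).1 ∈ A := by
  cases w with
  | nil => exact mul_mem hg hb
  | cons p r => exact hg

lemma mulLastP_ent {A : Subgroup Γ} {g b : Γ} (hb : b ∈ A)
    {w : List (ℤ × Γ)} (hw : Ent A w) : Ent A (mulLastP g w b).2 := by
  cases w with
  | nil => intro x hx; simp [mulLastP] at hx
  | cons p r => exact ent_mulLast hb (p :: r) hw

lemma mulLastP_chain' {Cm Cp : Subgroup Γ} (g b : Γ)
    {w : List (ℤ × Γ)} (hw : w.Chain' (Rrel Cm Cp)) :
    (mulLastP g w b).2.Chain' (Rrel Cm Cp) := by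
  cases w with
  | nil => exact List.isChain_nil
  | cons p r => exact chain'_mulLast b (p :: r) hw

/-- the block list of the inverse of the word `(g, w)` -/
def invW (g : Γ) : List (ℤ × Γ) → List (ℤ × Γ)
  | [] => []
  | p :: w => invW p.2 w ++ [(-p.1, g⁻¹)]

/-- the leading coefficient of the inverse of the word `(g, w)` -/
def invHead (g : Γ) : List (ℤ × Γ) → Γ
  | [] => g⁻¹
  | p :: w => invHead p.2 w

@[simp] lemma invW_length (g : Γ) : ∀ w : List (ℤ × Γ), (invW g w).length = w.length
  | [] => rfl
  | p :: w => by simp [invW, invW_length p.2 w]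

lemma invW_prod (t : Γ) : ∀ (w : List (ℤ × Γ)) (g : Γ),
    invHead g w * bprod t (invW g w) = (g * bprod t w)⁻¹
  | [], g => by simp [invW, invHead, bprod]
  | p :: w, g => by
    have := invW_prod t w p.2
    simp only [invW, invHead, bprod_append, bprod_cons]
    rw [← mul_assoc, this]
    simp [bprod, mul_assoc, zpow_neg]

lemma invHead_mem {A : Subgroup Γ} : ∀ (w : List (ℤ × Γ)) (g : Γ), g ∈ A → Ent A w →
    invHead g w ∈ A
  | [], g, hg, _ => inv_mem hg
  | p :: w, g, _, hw => invHead_mem w p.2 ((hw p (by simp)).2)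
      (fun y hy => hw y (List.mem_cons_of_mem _ hy))

lemma invHead_concat (g : Γ) (p : ℤ × Γ) : ∀ w : List (ℤ × Γ),
    invHead g (w ++ [p]) = p.2⁻¹
  | [] => rfl
  | q :: w => invHead_concat q.2 p w

lemma ent_invW {A : Subgroup Γ} : ∀ (w : List (ℤ × Γ)) (g : Γ), g ∈ A → Ent A w →
    Ent A (invW g w)
  | [], g, _, _ => by intro x hx; simp [invW] at hx
  | p :: w, g, hg, hw => by
    intro x hx
    rw [invW] at hx
    rcases List.mem_append.1 hx with hx | hx
    · exact ent_invW w p.2 ((hw p (by simp)).2)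
        (fun y hy => hw y (List.mem_cons_of_mem _ hy)) x hx
    · simp at hx
      subst hx
      have := (hw p (by simp)).1
      constructor
      · rcases this with h | h <;> simp [h]
      · exact inv_mem hg

lemma getLast?_invW (g : Γ) (p : ℤ × Γ) (w : List (ℤ × Γ)) :
    (invW g (p :: w)).getLast? = some (-p.1, g⁻¹) := by
  simp [invW]

lemma head?_fst_invW : ∀ (w : List (ℤ × Γ)) (g : Γ) (h : w ≠ []),
    ((invW g w).head?).map Prod.fst = some (-(w.getLast h).1)
  | [], _, h => absurd rfl h
  | [p], g, _ => by simp [invW]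
  | p :: q :: w, g, _ => by
    have := head?_fst_invW (q :: w) p.2 (by simp)
    rw [invW, List.getLast_cons (by simp : q :: w ≠ [])]
    rw [List.head?_append_of_ne_nil]
    · exact this
    · simp [← List.length_pos_iff_ne_nil]

lemma chain'_invW {Cm Cp : Subgroup Γ} : ∀ (w : List (ℤ × Γ)) (g : Γ),
    w.Chain' (Rrel Cm Cp) → (invW g w).Chain' (Rrel Cm Cp)
  | [], _, _ => List.isChain_nil
  | [p], g, _ => List.isChain_singleton _
  | p :: q :: w, g, h => by
    simp only [List.Chain', List.isChain_cons_cons] at h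
    have hrest := chain'_invW (q :: w) p.2 h.2
    rw [invW]
    refine List.IsChain.append hrest (List.isChain_singleton _) ?_
    intro x hx y hy
    rw [getLast?_invW] at hx
    simp at hx hy
    subst hx; subst hy
    -- x = (-q.1, p.2⁻¹), y = (-p.1, g⁻¹)
    intro hcond
    -- hcond : -p.1 = -(-q.1) = q.1
    have hq1 : q.1 = -p.1 := by
      simp at hcond
      omega
    have hp2 : p.2 ∉ toCsub Cm Cp p.1 := h.1 hq1
    have : toCsub Cm Cp (-q.1) = toCsub Cm Cp p.1 := by rw [hq1, neg_neg]
    rw [this]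
    simpa using hp2

/-- turn a block list `[(μ₁,u₁),…,(μₘ,uₘ)]` (element `u₁ t^{μ₁} ⋯ uₘ t^{μₘ}`)
into the tail of a reduced word: `[(μ₁,u₂),…,(μₘ₋₁,uₘ),(μₘ,1)]`. -/
def toW : List (ℤ × Γ) → List (ℤ × Γ)
  | [] => []
  | [p] => [(p.1, 1)]
  | p :: q :: r => (p.1, q.2) :: toW (q :: r)

@[simp] lemma toW_length : ∀ L : List (ℤ × Γ), (toW L).length = L.length
  | [] => rfl
  | [_] => rfl
  | p :: q :: r => by simpa [toW] using toW_length (q :: r)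

lemma blockProd_eq_toW (t : Γ) : ∀ (p : ℤ × Γ) (L : List (ℤ × Γ)),
    blockProd t (p :: L) = p.2 * bprod t (toW (p :: L))
  | p, [] => by simp [blockProd, toW, bprod, mul_assoc]
  | p, q :: r => by
    have := blockProd_eq_toW t q r
    rw [blockProd_cons, this, toW, bprod_cons]
    simp [mul_assoc]

lemma getLast?_toW : ∀ (L : List (ℤ × Γ)) (h : L ≠ []),
    (toW L).getLast? = some ((L.getLast h).1, 1)
  | [], h => absurd rfl h
  | [p], _ => by simp [toW]
  | p :: q :: r, _ => by
    have := getLast?_toW (q :: r) (by simp)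
    rw [toW, List.getLast_cons (by simp : q :: r ≠ [])]
    have hne : toW (q :: r) ≠ [] := by simp [← List.length_pos_iff_ne_nil]
    cases hm : toW (q :: r) with
    | nil => exact absurd hm hne
    | cons x xs =>
      rw [List.getLast?_cons_cons, ← hm, this]

lemma head?_fst_toW : ∀ (L : List (ℤ × Γ)) (p : ℤ × Γ),
    ((toW (p :: L)).head?).map Prod.fst = some p.1
  | [], p => by simp [toW]
  | q :: r, p => by simp [toW]

lemma ent_toW {A : Subgroup Γ} : ∀ L : List (ℤ × Γ), Ent A L → Ent A (toW L)
  | [], _ => by intro x hx; simp [toW] at hx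
  | [p], h => by
    intro x hx
    simp [toW] at hx
    subst hx
    exact ⟨(h p (by simp)).1, one_mem A⟩
  | p :: q :: r, h => by
    intro x hx
    rw [toW] at hx
    rcases List.mem_cons.1 hx with rfl | hx
    · exact ⟨(h p (by simp)).1, (h q (by simp)).2⟩
    · exact ent_toW (q :: r) (fun y hy => h y (List.mem_cons_of_mem _ hy)) x hx

lemma chain'_toW {Cm Cp : Subgroup Γ} : ∀ L : List (ℤ × Γ),
    L.Chain' (Srel Cm Cp) → (toW L).Chain' (Rrel Cm Cp)
  | [], _ => List.isChain_nil
  | [p], _ => List.isChain_singleton _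
  | p :: q :: r, h => by
    simp only [List.Chain', List.isChain_cons_cons] at h
    have hrest := chain'_toW (q :: r) h.2
    rw [toW]
    cases r with
    | nil =>
      exact List.isChain_cons_cons.2 ⟨fun hc => h.1 hc, hrest⟩
    | cons x xs =>
      rw [toW] at hrest ⊢
      exact List.isChain_cons_cons.2 ⟨fun hc => h.1 hc, hrest⟩

/-- cyclically reduced block list -/
def CycRed (Cm Cp : Subgroup Γ) (L : List (ℤ × Γ)) : Prop :=
  L.Chain' (Srel Cm Cp) ∧ ∀ p ∈ L.getLast?, ∀ q ∈ L.head?, Srel Cm Cp p q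

lemma cycRed_rotate_one {Cm Cp : Subgroup Γ} {L : List (ℤ × Γ)}
    (h : CycRed Cm Cp L) : CycRed Cm Cp (L.rotate 1) := by
  obtain ⟨hc, hw⟩ := h
  cases L with
  | nil => exact ⟨List.isChain_nil, by simp⟩
  | cons p L' =>
    rw [List.rotate_cons_succ, List.rotate_zero]
    cases L' with
    | nil =>
      exact ⟨List.isChain_singleton _, by simpa using hw⟩
    | cons q L'' =>
      simp only [List.Chain', List.isChain_cons_cons] at hc
      constructor
      · refine List.IsChain.append hc.2 (List.isChain_singleton _) ?_
        intro x hx y hy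
        simp at hy
        subst hy
        exact hw x (by rw [List.getLast?_cons_cons]; exact hx) p (by simp)
      · intro x hx y hy
        rw [List.getLast?_concat] at hx
        simp at hx
        subst hx
        simp at hy
        subst hy
        exact hc.1

lemma cycRed_rotate {Cm Cp : Subgroup Γ} {L : List (ℤ × Γ)}
    (h : CycRed Cm Cp L) : ∀ n, CycRed Cm Cp (L.rotate n)
  | 0 => by simpa using h
  | n + 1 => by
    have := cycRed_rotate_one (cycRed_rotate h n)
    rwa [List.rotate_rotate] at this

lemma britton {A Cm Cp : Subgroup Γ} {t : Γ} (hH : IsHNN A Cm Cp t)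
    {g₀ : Γ} {w : List (ℤ × Γ)} (hg : g₀ ∈ A) (hent : Ent A w)
    (hch : w.Chain' (Rrel Cm Cp)) (hw : w ≠ []) : hnnProd t g₀ w ≠ 1 :=
  hH.2.2.2.2 g₀ w ⟨hg, hent, hch⟩ hw

lemma ne_of_red {A Cm Cp : Subgroup Γ} {t : Γ} (hH : IsHNN A Cm Cp t)
    {x y : Γ} (hx : x ∈ A) {w : List (ℤ × Γ)} (hy : y ∈ A) (hent : Ent A w)
    (hch : w.Chain' (Rrel Cm Cp)) (hw : w ≠ []) :
    hnnProd t y w ≠ x := by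
  intro he
  have h1 : hnnProd t (x⁻¹ * y) w = 1 := by
    rw [hnnProd_eq] at he ⊢
    rw [mul_assoc, he]
    simp
  exact britton hH (mul_mem (inv_mem hx) hy) hent hch hw h1

lemma head_pinch {A Cm Cp : Subgroup Γ} {t : Γ} (hH : IsHNN A Cm Cp t)
    {x y x₁ y₁ : Γ} {ε δ : ℤ} {w₁ w₂ : List (ℤ × Γ)}
    (hx : x ∈ A) (hent₁ : Ent A ((ε,x₁)::w₁)) (hch₁ : ((ε,x₁)::w₁).Chain' (Rrel Cm Cp))
    (hy : y ∈ A) (hent₂ : Ent A ((δ,y₁)::w₂)) (hch₂ : ((δ,y₁)::w₂).Chain' (Rrel Cm Cp))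
    (heq : hnnProd t x ((ε,x₁)::w₁) = hnnProd t y ((δ,y₁)::w₂)) :
    ε = δ ∧ y⁻¹ * x ∈ toCsub Cm Cp (-δ) := by
  by_contra hcon
  push_neg at hcon
  -- the inverse word of (y, (δ,y₁)::w₂)
  have hinv : invW y ((δ,y₁)::w₂) = invW y₁ w₂ ++ [(-δ, y⁻¹)] := rfl
  have hml : mulLast x (invW y ((δ,y₁)::w₂)) = invW y₁ w₂ ++ [(-δ, y⁻¹ * x)] := by
    rw [hinv, mulLast_concat]
  set Z : List (ℤ × Γ) := mulLast x (invW y ((δ,y₁)::w₂)) ++ (ε,x₁)::w₁ with hZ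
  have hentw₂ : Ent A ((δ,y₁)::w₂) := hent₂
  have hprod : hnnProd t (invHead y ((δ,y₁)::w₂)) Z = 1 := by
    rw [hnnProd_eq, hZ, bprod_append, bprod_mulLast t x _
      (by rw [hinv]; simp)]
    have h2 := invW_prod t ((δ,y₁)::w₂) y
    rw [← mul_assoc, ← mul_assoc, h2]
    rw [hnnProd_eq, hnnProd_eq] at heq
    rw [mul_assoc, heq]
    group
  have hchZ : Z.Chain' (Rrel Cm Cp) := by
    refine List.IsChain.append (chain'_mulLast x _ (chain'_invW _ y hch₂)) hch₁ ?_
    intro p hp q hq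
    rw [hml, List.getLast?_concat] at hp
    simp at hp hq
    subst hp; subst hq
    intro hcond
    simp only at hcond
    have hεδ : ε = δ := by omega
    exact hcon hεδ
  have hentZ : Ent A Z := by
    intro p hp
    rw [hZ] at hp
    rcases List.mem_append.1 hp with hp | hp
    · rw [hml] at hp
      rcases List.mem_append.1 hp with hp | hp
      · exact ent_invW w₂ y₁ (hent₂ (δ,y₁) (by simp)).2
          (fun z hz => hent₂ z (List.mem_cons_of_mem _ hz)) p hp
      · simp at hp
        subst hp
        refine ⟨?_, mul_mem (inv_mem hy) hx⟩
        have := (hent₂ (δ,y₁) (by simp)).1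
        simp only at this ⊢
        omega
    · exact hent₁ p hp
  have hZne : Z ≠ [] := by
    rw [hZ]; simp
  exact britton hH (invHead_mem _ y hy hent₂) hentZ hchZ hZne hprod

lemma eq_reduced {A Cm Cp : Subgroup Γ} {t : Γ} (hH : IsHNN A Cm Cp t) :
    ∀ (w₁ : List (ℤ × Γ)) (x y : Γ) (w₂ : List (ℤ × Γ)),
    x ∈ A → Ent A w₁ → w₁.Chain' (Rrel Cm Cp) →
    y ∈ A → Ent A w₂ → w₂.Chain' (Rrel Cm Cp) →
    hnnProd t x w₁ = hnnProd t y w₂ →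
    w₁.map Prod.fst = w₂.map Prod.fst ∧ (w₁ = [] → x = y) ∧
    ∀ p ∈ w₁.getLast?, ∀ q ∈ w₂.getLast?, ∃ c ∈ toCsub Cm Cp p.1, p.2 = c * q.2 := by
  intro w₁
  induction w₁ with
  | nil =>
    intro x y w₂ hx _ _ hy hent₂ hch₂ heq
    cases w₂ with
    | nil =>
      refine ⟨rfl, fun _ => ?_, by simp⟩
      simpa [hnnProd_eq, bprod] using heq
    | cons Q w₂' =>
      exfalso
      apply ne_of_red hH hx hy hent₂ hch₂ (by simp : Q :: w₂' ≠ [])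
      rw [← heq]
      simp [hnnProd_eq, bprod]
  | cons P w₁' ih =>
    intro x y w₂ hx hent₁ hch₁ hy hent₂ hch₂ heq
    obtain ⟨ε, x₁⟩ := P
    cases w₂ with
    | nil =>
      exfalso
      apply ne_of_red hH hy hx hent₁ hch₁ (by simp : (ε, x₁) :: w₁' ≠ [])
      rw [heq]
      simp [hnnProd_eq, bprod]
    | cons Q w₂' =>
      obtain ⟨δ, y₁⟩ := Q
      obtain ⟨hεδ, hc⟩ := head_pinch hH hx hent₁ hch₁ hy hent₂ hch₂ heq
      subst hεδ
      have hδpm : ε = 1 ∨ ε = -1 := (hent₂ (ε, y₁) (by simp)).1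
      have hδpm' : -ε = 1 ∨ -ε = -1 := by omega
      have hc' : t ^ (-ε) * (y⁻¹ * x) * t ^ ε ∈ toCsub Cm Cp ε := by
        have := pinch_mem hH hδpm' hc
        rwa [neg_neg] at this
      have heq2 : x * (t ^ ε * x₁ * bprod t w₁') = y * (t ^ ε * y₁ * bprod t w₂') := by
        simpa only [hnnProd_eq, bprod_cons] using heq
      have heq' : hnnProd t ((t ^ (-ε) * (y⁻¹ * x) * t ^ ε) * x₁) w₁' =
          hnnProd t y₁ w₂' := by
        have h3 := congrArg (fun z : Γ => (t ^ ε)⁻¹ * (y⁻¹ * z)) heq2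
        simp only [hnnProd_eq, zpow_neg]
        simpa [mul_assoc] using h3
      have hcA : (t ^ (-ε) * (y⁻¹ * x) * t ^ ε) ∈ A := toCsub_le hH.1 hH.2.1 ε hc'
      obtain ⟨hmap', hemp', hlast'⟩ := ih ((t ^ (-ε) * (y⁻¹ * x) * t ^ ε) * x₁) y₁ w₂'
        (mul_mem hcA (hent₁ (ε, x₁) (by simp)).2)
        (fun p hp => hent₁ p (List.mem_cons_of_mem _ hp))
        hch₁.tail
        (hent₂ (ε, y₁) (by simp)).2
        (fun p hp => hent₂ p (List.mem_cons_of_mem _ hp))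
        hch₂.tail heq'
      refine ⟨by simpa using hmap', by simp, ?_⟩
      intro p hp q hq
      cases w₁' with
      | nil =>
        have hw₂' : w₂' = [] := by
          simpa using hmap'.symm
        subst hw₂'
        simp at hp hq
        subst hp; subst hq
        have hxy : (t ^ (-ε) * (y⁻¹ * x) * t ^ ε) * x₁ = y₁ := by
          simpa [hnnProd_eq, bprod] using hemp' rfl
        refine ⟨(t ^ (-ε) * (y⁻¹ * x) * t ^ ε)⁻¹, inv_mem hc', ?_⟩
        simp only
        rw [← hxy]
        group
      | cons X xs =>
        have : ∃ Y ys, w₂' = Y :: ys := by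
          cases w₂' with
          | nil => simp at hmap'
          | cons Y ys => exact ⟨Y, ys, rfl⟩
        obtain ⟨Y, ys, rfl⟩ := this
        rw [List.getLast?_cons_cons] at hp hq
        exact hlast' p hp q hq

lemma toW_ne_nil {L : List (ℤ × Γ)} (h : L ≠ []) : toW L ≠ [] := by
  have h1 := toW_length L
  have h2 : 0 < L.length := List.length_pos_of_ne_nil h
  intro hc
  rw [hc] at h1
  simp at h1
  omega

lemma base_case {A Cm Cp : Subgroup Γ} {t : Γ} (hH : IsHNN A Cm Cp t)
    {γ g₀ : Γ} (hγ : HNNCyclicallyReduced A Cm Cp t γ)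
    (hg₀ : g₀ ∈ A) {L : List (ℤ × Γ)} (hLne : L ≠ [])
    (hentL : Ent A L) (hcycL : CycRed Cm Cp L)
    (heq : γ = g₀ * blockProd t L * g₀⁻¹) :
    g₀ ∈ toCsub Cm Cp ((L.getLast hLne).1) := by
  obtain ⟨P, L₁, rfl⟩ : ∃ P L₁, L = P :: L₁ := by
    cases L with
    | nil => exact absurd rfl hLne
    | cons P L₁ => exact ⟨P, L₁, rfl⟩
  set L : List (ℤ × Γ) := P :: L₁
  set W₀ : List (ℤ × Γ) := mulLast g₀⁻¹ (toW L) with hW₀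
  have hW₀ne : W₀ ≠ [] := by
    have h1 : W₀.length = L.length := by simp [hW₀]
    intro hc; rw [hc] at h1; simp [L] at h1
  have hPA : P.2 ∈ A := (hentL P (by simp [L])).2
  have hprodW₀ : hnnProd t (g₀ * P.2) W₀ = γ := by
    rw [hnnProd_eq, hW₀, bprod_mulLast t _ _ (toW_ne_nil (by simp [L]))]
    rw [heq]
    have := blockProd_eq_toW t P L₁
    rw [this]
    group
    rfl
  have hentW₀ : Ent A W₀ := ent_mulLast (inv_mem hg₀) _ (ent_toW L hentL)
  have hchW₀ : W₀.Chain' (Rrel Cm Cp) := chain'_mulLast _ _ (chain'_toW L hcycL.1)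
  rcases hγ with hA | ⟨y₀, v, ⟨hy₀, hentv, hchv⟩, hvprod, p, q, hqv, hpv, hp1, _⟩
  · exfalso
    apply britton hH (mul_mem (inv_mem hA) (mul_mem hg₀ hPA)) hentW₀ hchW₀ hW₀ne
    rw [hnnProd_eq, mul_assoc, ← hnnProd_eq, hprodW₀]
    simp
  · have heqv : hnnProd t (g₀ * P.2) W₀ = hnnProd t y₀ v := by
      rw [hprodW₀, hvprod]
    obtain ⟨-, -, hlast⟩ := eq_reduced hH W₀ (g₀ * P.2) y₀ v
      (mul_mem hg₀ hPA) hentW₀ hchW₀ hy₀ hentv hchv heqv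
    have hW₀last : W₀.getLast? = some (((L.getLast hLne).1), 1 * g₀⁻¹) := by
      rw [hW₀, getLast?_mulLast, getLast?_toW L hLne]
      rfl
    obtain ⟨c, hcmem, hceq⟩ := hlast _ hW₀last p hpv
    rw [hp1, mul_one] at hceq
    simp only [one_mul] at hceq
    have : g₀⁻¹ ∈ toCsub Cm Cp ((L.getLast hLne).1) := hceq ▸ hcmem
    exact (inv_mem_iff).1 this

lemma reduce_step {A Cm Cp : Subgroup Γ} {t : Γ} (hH : IsHNN A Cm Cp t) :
    ∀ (w : List (ℤ × Γ)) (g₀ : Γ), g₀ ∈ A → Ent A w →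
    ¬ w.Chain' (Rrel Cm Cp) →
    ∃ g₁ w₁, g₁ ∈ A ∧ Ent A w₁ ∧ w₁.length + 2 = w.length ∧
      hnnProd t g₁ w₁ = hnnProd t g₀ w
  | [], g₀, _, _, hch => absurd List.isChain_nil hch
  | [p], g₀, _, _, hch => absurd (List.isChain_singleton _) hch
  | p :: q :: r, g₀, hg₀, hent, hch => by
    simp only [List.Chain', List.isChain_cons_cons] at hch
    by_cases hpq : Rrel Cm Cp p q
    · have hch' : ¬ (q :: r).Chain' (Rrel Cm Cp) := fun h => hch ⟨hpq, h⟩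
      obtain ⟨g₁', w₁', hg₁', hent', hlen', hprod'⟩ :=
        reduce_step hH (q :: r) p.2 (hent p (by simp)).2
          (fun y hy => hent y (List.mem_cons_of_mem _ hy)) hch'
      refine ⟨g₀, (p.1, g₁') :: w₁', hg₀, ?_, by simpa using hlen', ?_⟩
      · intro x hx
        rcases List.mem_cons.1 hx with rfl | hx
        · exact ⟨(hent p (by simp)).1, hg₁'⟩
        · exact hent' x hx
      · rw [hnnProd_eq, hnnProd_eq, bprod_cons, bprod_cons]
        simp only
        rw [hnnProd_eq, hnnProd_eq] at hprod'
        calc g₀ * (t ^ p.1 * g₁' * bprod t w₁')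
            = g₀ * (t ^ p.1 * (g₁' * bprod t w₁')) := by group
          _ = g₀ * (t ^ p.1 * (p.2 * bprod t (q :: r))) := by rw [hprod']
          _ = g₀ * (t ^ p.1 * p.2 * bprod t (q :: r)) := by group
    · have hpin : q.1 = -p.1 ∧ p.2 ∈ toCsub Cm Cp p.1 := by
        by_contra hc
        exact hpq (fun h1 h2 => hc ⟨h1, h2⟩)
      have hppm : p.1 = 1 ∨ p.1 = -1 := (hent p (by simp)).1
      have hcm : t ^ p.1 * p.2 * t ^ (-p.1) ∈ toCsub Cm Cp (-p.1) :=
        pinch_mem hH hppm hpin.2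
      have hcA : t ^ p.1 * p.2 * t ^ (-p.1) ∈ A := toCsub_le hH.1 hH.2.1 _ hcm
      refine ⟨g₀ * (t ^ p.1 * p.2 * t ^ (-p.1)) * q.2, r,
        mul_mem (mul_mem hg₀ hcA) (hent q (by simp)).2,
        (fun y hy => hent y (List.mem_cons_of_mem _ (List.mem_cons_of_mem _ hy))),
        by simp, ?_⟩
      rw [hnnProd_eq, hnnProd_eq, bprod_cons, bprod_cons]
      rw [hpin.1]
      group

lemma gen_word {A Cm Cp : Subgroup Γ} {t : Γ} (hH : IsHNN A Cm Cp t) (g : Γ) :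
    ∃ g₀ w, g₀ ∈ A ∧ Ent A w ∧ hnnProd t g₀ w = g := by
  have hg : g ∈ Subgroup.closure ((A : Set Γ) ∪ {t}) := by
    rw [hH.2.2.2.1]; trivial
  induction hg using Subgroup.closure_induction with
  | mem x hx =>
    rcases hx with hx | hx
    · exact ⟨x, [], hx, by intro y hy; simp at hy, by simp [hnnProd_eq, bprod]⟩
    · refine ⟨1, [((1 : ℤ), (1 : Γ))], one_mem A, ?_, ?_⟩
      · intro y hy
        simp at hy
        subst hy
        exact ⟨Or.inl rfl, one_mem A⟩
      · simp at hx
        subst hx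
        simp [hnnProd_eq, bprod]
  | one => exact ⟨1, [], one_mem A, by intro y hy; simp at hy, by simp [hnnProd_eq, bprod]⟩
  | mul x y _ _ hx hy =>
    obtain ⟨a, v, ha, henta, hva⟩ := hx
    obtain ⟨b, w, hb, hentb, hwb⟩ := hy
    refine ⟨(mulLastP a v b).1, (mulLastP a v b).2 ++ w,
      mulLastP_mem ha hb v, ?_, ?_⟩
    · intro z hz
      rcases List.mem_append.1 hz with hz | hz
      · exact mulLastP_ent hb henta z hz
      · exact hentb z hz
    · rw [hnnProd_eq, bprod_append, ← mul_assoc, mulLastP_prod]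
      rw [hnnProd_eq] at hva hwb
      rw [← hva, ← hwb]
      group
  | inv x _ hx =>
    obtain ⟨a, v, ha, henta, hva⟩ := hx
    refine ⟨invHead a v, invW a v, invHead_mem v a ha henta, ent_invW v a ha henta, ?_⟩
    rw [hnnProd_eq, invW_prod, ← hnnProd_eq, hva]

lemma step_case {A Cm Cp : Subgroup Γ} {t : Γ} (hH : IsHNN A Cm Cp t)
    {γ : Γ} (hγ : HNNCyclicallyReduced A Cm Cp t γ)
    {g₀ : Γ} (hg₀ : g₀ ∈ A) {w' : List (ℤ × Γ)} {ν : ℤ} {a : Γ}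
    (hentw : Ent A (w' ++ [(ν, a)]))
    (hchw : (w' ++ [(ν, a)]).Chain' (Rrel Cm Cp))
    {L : List (ℤ × Γ)} (hLne : L ≠ []) (hentL : Ent A L) (hcycL : CycRed Cm Cp L)
    (heq : γ = hnnProd t g₀ (w' ++ [(ν, a)]) * blockProd t L *
      (hnnProd t g₀ (w' ++ [(ν, a)]))⁻¹) :
    ((L.head hLne).1 = -ν ∧ a * (L.head hLne).2 ∈ toCsub Cm Cp ν) ∨
    (ν = (L.getLast hLne).1 ∧ a⁻¹ ∈ toCsub Cm Cp (L.getLast hLne).1) := by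
  by_contra hcon
  push_neg at hcon
  obtain ⟨hc1, hc2⟩ := hcon
  obtain ⟨P, L₁, rfl⟩ : ∃ P L₁, L = P :: L₁ := by
    cases L with
    | nil => exact absurd rfl hLne
    | cons P L₁ => exact ⟨P, L₁, rfl⟩
  have hLhead : (P :: L₁).head hLne = P := rfl
  have haA : a ∈ A := (hentw (ν, a) (by simp)).2
  have hPA : P.2 ∈ A := (hentL P (by simp)).2
  have hνpm : ν = 1 ∨ ν = -1 := (hentw (ν, a) (by simp)).1
  set wf : List (ℤ × Γ) := w' ++ [(ν, a)] with hwfdef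
  have hwfne : wf ≠ [] := by simp [hwfdef]
  obtain ⟨P₁, wrest, hwf⟩ : ∃ P₁ wrest, wf = P₁ :: wrest := by
    cases hx : wf with
    | nil => exact absurd hx hwfne
    | cons P₁ wrest => exact ⟨P₁, wrest, rfl⟩
  set M1 : List (ℤ × Γ) := mulLast P.2 wf with hM1
  set M2 : List (ℤ × Γ) := mulLast a⁻¹ (toW (P :: L₁)) with hM2
  set M3 : List (ℤ × Γ) := invW g₀ wf with hM3
  set BW : List (ℤ × Γ) := M1 ++ (M2 ++ M3) with hBW
  have hM1ne : M1 ≠ [] := by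
    have : M1.length = wf.length := by simp [hM1]
    intro hc; rw [hc] at this; rw [hwf] at this; simp at this
  have hM2ne : M2 ≠ [] := by
    have : M2.length = (toW (P :: L₁)).length := by simp [hM2]
    intro hc; rw [hc] at this; simp at this
  have hM3ne : M3 ≠ [] := by
    have : M3.length = wf.length := by simp [hM3]
    intro hc; rw [hc] at this; rw [hwf] at this; simp at this
  -- junction data
  have hlastM1 : M1.getLast? = some (ν, a * P.2) := by
    rw [hM1, getLast?_mulLast]
    rw [hwfdef, List.getLast?_concat]
    rfl
  have hheadM2 : (M2.head?).map Prod.fst = some P.1 := by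
    rw [hM2, head?_fst_mulLast, head?_fst_toW]
  have hlastM2 : M2.getLast? = some (((P :: L₁).getLast hLne).1, 1 * a⁻¹) := by
    rw [hM2, getLast?_mulLast, getLast?_toW _ hLne]
    rfl
  have hwfgetLast : wf.getLast hwfne = (ν, a) := by
    have h1 : wf.getLast? = some (ν, a) := by rw [hwfdef]; exact List.getLast?_concat
    have h2 := List.getLast?_eq_getLast hwfne
    rw [h1] at h2
    exact (Option.some_inj.1 h2).symm
  have hheadM3 : (M3.head?).map Prod.fst = some (-ν) := by
    rw [hM3, head?_fst_invW wf g₀ hwfne, hwfgetLast]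
  have hlastM3 : M3.getLast? = some (-P₁.1, g₀⁻¹) := by
    rw [hM3, hwf]
    exact getLast?_invW g₀ P₁ wrest
  -- chain
  have hchBW : BW.Chain' (Rrel Cm Cp) := by
    refine List.IsChain.append (chain'_mulLast _ _ hchw) ?_ ?_
    · refine List.IsChain.append (chain'_mulLast _ _ (chain'_toW _ hcycL.1))
        (chain'_invW wf g₀ hchw) ?_
      intro x hx y hy
      rw [hlastM2] at hx
      simp at hx
      subst hx
      have hy1 : y.1 = -ν := by
        rw [hy] at hheadM3
        simp at hheadM3
        omega
      intro hcond
      rw [hy1] at hcond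
      have hνL : ν = ((P :: L₁).getLast hLne).1 := by
        simp only at hcond
        omega
      have := hc2 hνL
      simpa using this
    · intro x hx y hy
      rw [hlastM1] at hx
      simp at hx
      subst hx
      rw [List.head?_append_of_ne_nil _ hM2ne] at hy
      have hy1 : y.1 = P.1 := by
        rw [hy] at hheadM2
        simp at hheadM2
        omega
      intro hcond
      rw [hy1] at hcond
      simp only at hcond
      have := hc1 (by rw [hLhead]; exact hcond)
      rw [hLhead] at this
      simpa using this
  -- entries
  have hentBW : Ent A BW := by
    intro x hx
    rw [hBW] at hx
    rcases List.mem_append.1 hx with hx | hx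
    · exact ent_mulLast hPA wf hentw x hx
    · rcases List.mem_append.1 hx with hx | hx
      · exact ent_mulLast (inv_mem haA) _ (ent_toW _ hentL) x hx
      · exact ent_invW wf g₀ hg₀ hentw x hx
  -- product
  have hprodBW : hnnProd t g₀ BW = γ := by
    rw [hnnProd_eq, hBW, bprod_append, bprod_append]
    rw [hM1, bprod_mulLast t _ _ hwfne]
    rw [hM2, bprod_mulLast t _ _ (toW_ne_nil (by simp : (P :: L₁) ≠ []))]
    have hbm3 : bprod t M3 = a * (g₀ * bprod t wf)⁻¹ := by
      have h1 := invW_prod t wf g₀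
      have h2 : invHead g₀ wf = a⁻¹ := by
        rw [hwfdef]
        exact invHead_concat g₀ (ν, a) w'
      rw [h2] at h1
      rw [hM3]
      rw [← h1]
      group
    rw [hbm3]
    rw [heq, hnnProd_eq, blockProd_eq_toW]
    group
  -- γ is not in A
  rcases hγ with hA | ⟨y₀, v, ⟨hy₀, hentv, hchv⟩, hvprod, p, q, hqv, hpv, hp1, hcond⟩
  · exfalso
    apply britton hH (mul_mem (inv_mem hA) hg₀) hentBW hchBW
      (by rw [hBW]; simp [hM1ne])
    rw [hnnProd_eq, mul_assoc, ← hnnProd_eq, hprodBW]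
    simp
  · have heqv : hnnProd t g₀ BW = hnnProd t y₀ v := by rw [hprodBW, hvprod]
    obtain ⟨hmap, -, hlast⟩ := eq_reduced hH BW g₀ y₀ v hg₀ hentBW hchBW hy₀ hentv hchv heqv
    have hlastBW : BW.getLast? = some (-P₁.1, g₀⁻¹) := by
      rw [hBW, List.getLast?_append_of_ne_nil _ (by simp [hM3ne]),
        List.getLast?_append_of_ne_nil _ hM3ne, hlastM3]
    -- last coefficient of the cyclically reduced form
    obtain ⟨c, hcmem, hceq⟩ := hlast _ hlastBW p hpv
    rw [hp1, mul_one] at hceq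
    have hg₀inv : g₀⁻¹ ∈ toCsub Cm Cp (-P₁.1) := by
      have h0 : g₀⁻¹ = c := hceq
      rw [h0]
      exact hcmem
    -- p.1 = -P₁.1
    have hp1' : p.1 = -P₁.1 := by
      have h1 := congrArg List.getLast? hmap
      rw [List.getLast?_map, List.getLast?_map, hlastBW, hpv] at h1
      simp at h1
      omega
    -- head of v
    have hheadBW : (BW.head?).map Prod.fst = some P₁.1 := by
      rw [hBW, List.head?_append_of_ne_nil _ hM1ne, hM1, head?_fst_mulLast, hwf]
      simp
    have hq1 : q.1 = P₁.1 := by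
      have h1 := congrArg List.head? hmap
      rw [List.head?_map, List.head?_map, hqv] at h1
      rw [h1] at hheadBW
      simp at hheadBW
      omega
    -- apply the head lemma
    obtain ⟨B₁, Brest, hbw⟩ : ∃ B₁ Brest, BW = B₁ :: Brest := by
      cases hx : BW with
      | nil => rw [hBW] at hx; simp [hM1ne] at hx
      | cons B₁ Brest => exact ⟨B₁, Brest, rfl⟩
    obtain ⟨vrest, hv⟩ : ∃ vrest, v = q :: vrest := by
      cases hx : v with
      | nil => rw [hx] at hqv; simp at hqv
      | cons vq vrest =>
        rw [hx] at hqv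
        simp at hqv
        exact ⟨vrest, by rw [hqv]⟩
    obtain ⟨β, bc⟩ := B₁
    obtain ⟨qε, qc⟩ := q
    have hB₁ : β = P₁.1 := by
      rw [hbw] at hheadBW
      simp at hheadBW
      omega
    have hq1' : qε = P₁.1 := hq1
    have hpinch := head_pinch (x := g₀) (y := y₀) (ε := β) (δ := qε)
      (x₁ := bc) (y₁ := qc) (w₁ := Brest) (w₂ := vrest) hH hg₀
      (by rw [← hbw]; exact hentBW) (by rw [← hbw]; exact hchBW)
      hy₀ (by rw [← hv]; exact hentv) (by rw [← hv]; exact hchv)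
      (by rw [← hbw, ← hv]; exact heqv)
    obtain ⟨-, hy₀mem⟩ := hpinch
    rw [hq1'] at hy₀mem
    have hy₀T : y₀ ∈ toCsub Cm Cp (-P₁.1) := by
      have h1 : (y₀⁻¹ * g₀) * g₀⁻¹ ∈ toCsub Cm Cp (-P₁.1) := mul_mem hy₀mem hg₀inv
      have h2 : (y₀⁻¹ * g₀) * g₀⁻¹ = y₀⁻¹ := by group
      rw [h2] at h1
      exact (inv_mem_iff).1 h1
    -- contradiction with the cyclic reducedness of the witness
    rcases hcond with hlen1 | hncond
    · have h1 := congrArg List.length hmap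
      rw [List.length_map, List.length_map] at h1
      have h2 : BW.length = M1.length + M2.length + M3.length := by
        rw [hBW]; simp [List.length_append]; omega
      have h3 : M1.length = wf.length := by simp [hM1]
      have h4 : M3.length = wf.length := by simp [hM3]
      have h5 : 0 < wf.length := List.length_pos_of_ne_nil hwfne
      have h6 : 0 < M2.length := List.length_pos_of_ne_nil hM2ne
      omega
    · refine hncond ⟨?_, by rw [hp1']; exact hy₀T⟩
      simp only
      omega

lemma rot_shift {Cm Cp : Subgroup Γ} {t γ : Γ} {L : List (ℤ × Γ)} (hLne : L ≠ [])
    (s : ℕ)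
    (h : ∃ r' : ℕ, ∃ h' : r' < (L.rotate s).length,
      ∃ α ∈ toCsub Cm Cp ((L.rotate s).get ⟨r', h'⟩).1,
        γ = α * blockProd t ((L.rotate s).rotate (r' + 1)) * α⁻¹) :
    ∃ r : ℕ, ∃ hr : r < L.length, ∃ α ∈ toCsub Cm Cp (L.get ⟨r, hr⟩).1,
      γ = α * blockProd t (L.rotate (r + 1)) * α⁻¹ := by
  obtain ⟨r', h', α, hα, hγ⟩ := h
  have hlen : 0 < L.length := List.length_pos_of_ne_nil hLne
  refine ⟨(r' + s) % L.length, Nat.mod_lt _ hlen, α, ?_, ?_⟩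
  · have hg := List.get_rotate L s ⟨r', h'⟩
    rw [hg] at hα
    exact hα
  · have hidx : ((r' + s) % L.length + 1) % L.length = (s + (r' + 1)) % L.length := by
      rw [Nat.mod_add_mod]
      congr 1
      omega
    have hll : L.rotate ((r' + s) % L.length + 1) = L.rotate (s + (r' + 1)) := by
      rw [← List.rotate_mod, hidx, List.rotate_mod]
    rw [hγ, List.rotate_rotate, ← hll]

lemma main_lemma {A Cm Cp : Subgroup Γ} {t : Γ} (hH : IsHNN A Cm Cp t)
    {γ : Γ} (hγ : HNNCyclicallyReduced A Cm Cp t γ) :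
    ∀ n : ℕ, ∀ w : List (ℤ × Γ), w.length ≤ n → ∀ g₀ : Γ, g₀ ∈ A → Ent A w →
    ∀ L : List (ℤ × Γ), L ≠ [] → Ent A L → CycRed Cm Cp L →
    γ = hnnProd t g₀ w * blockProd t L * (hnnProd t g₀ w)⁻¹ →
    ∃ r : ℕ, ∃ hr : r < L.length, ∃ α ∈ toCsub Cm Cp (L.get ⟨r, hr⟩).1,
      γ = α * blockProd t (L.rotate (r + 1)) * α⁻¹ := by
  intro n
  induction n using Nat.strong_induction_on with
  | _ n IH =>
  intro w hwn g₀ hg₀ hentw L hLne hentL hcycL heq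
  have hlenL : 0 < L.length := List.length_pos_of_ne_nil hLne
  by_cases hw : w = []
  · -- base case : conjugator in A
    subst hw
    have heq' : γ = g₀ * blockProd t L * g₀⁻¹ := by
      simpa [hnnProd_eq, bprod] using heq
    have hmem := base_case hH hγ hg₀ hLne hentL hcycL heq'
    refine ⟨L.length - 1, by omega, g₀, ?_, ?_⟩
    · have hg : L.get ⟨L.length - 1, by omega⟩ = L.getLast hLne := by
        rw [List.getLast_eq_getElem]
        rfl
      rw [hg]
      exact hmem
    · rw [Nat.sub_add_cancel hlenL, List.rotate_length]
      exact heq'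
  · by_cases hch : w.Chain' (Rrel Cm Cp)
    · -- the conjugator word is reduced; find a pinch at a junction
      obtain ⟨w', Q₀, rfl⟩ : ∃ w' Q₀, w = w' ++ [Q₀] := by
        rcases List.eq_nil_or_concat w with h | ⟨w', Q₀, h⟩
        · exact absurd h hw
        · exact ⟨w', Q₀, by simpa [List.concat_eq_append] using h⟩
      obtain ⟨ν, a⟩ := Q₀
      have hνpm : ν = 1 ∨ ν = -1 := (hentw (ν, a) (by simp)).1
      have haA : a ∈ A := (hentw (ν, a) (by simp)).2
      have hentw' : Ent A w' := fun y hy => hentw y (by simp [hy])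
      have hwlen : w'.length + 1 ≤ n := by simpa using hwn
      rcases step_case hH hγ hg₀ hentw hch hLne hentL hcycL heq with hB | hA
      · -- pinch at the head of L
        obtain ⟨P, L₁, rfl⟩ : ∃ P L₁, L = P :: L₁ := by
          cases L with
          | nil => exact absurd rfl hLne
          | cons P L₁ => exact ⟨P, L₁, rfl⟩
        have hP1 : P.1 = -ν := hB.1
        have hPC : a * P.2 ∈ toCsub Cm Cp ν := hB.2
        have hd : t ^ ν * (a * P.2) * t ^ (-ν) ∈ toCsub Cm Cp (-ν) :=
          pinch_mem hH hνpm hPC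
        have hdA : t ^ ν * (a * P.2) * t ^ (-ν) ∈ A := toCsub_le hH.1 hH.2.1 _ hd
        set d : Γ := t ^ ν * (a * P.2) * t ^ (-ν) with hddef
        set g₁ : Γ := (mulLastP g₀ w' d).1
        set w₁ : List (ℤ × Γ) := (mulLastP g₀ w' d).2
        have hgw : hnnProd t g₀ (w' ++ [(ν, a)]) * (P.2 * t ^ P.1) =
            hnnProd t g₁ w₁ := by
          rw [hnnProd_eq, hnnProd_eq, bprod_append]
          have := mulLastP_prod t g₀ d w'
          rw [this, hddef, hP1]
          simp only [bprod, List.map_cons, List.map_nil, List.prod_cons, List.prod_nil]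
          group
        have hrot1 : blockProd t ((P :: L₁).rotate 1) =
            (P.2 * t ^ P.1)⁻¹ * blockProd t (P :: L₁) * (P.2 * t ^ P.1) := by
          rw [List.rotate_cons_succ, List.rotate_zero, blockProd_append, blockProd_cons]
          simp only [blockProd, List.map_cons, List.map_nil, List.prod_cons, List.prod_nil]
          group
        have heq2 : γ = hnnProd t g₁ w₁ * blockProd t ((P :: L₁).rotate 1) *
            (hnnProd t g₁ w₁)⁻¹ := by
          rw [← hgw, hrot1, heq]
          group
        have hres := IH w₁.length
          (by
            have h1 : w₁.length = w'.length := mulLastP_length g₀ d w'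
            omega)
          w₁ le_rfl g₁ (mulLastP_mem hg₀ hdA w') (mulLastP_ent hdA hentw')
          ((P :: L₁).rotate 1)
          (by simp [← List.length_pos_iff_ne_nil])
          (fun y hy => hentL y (List.mem_rotate.1 hy))
          (cycRed_rotate hcycL 1) heq2
        exact rot_shift hLne 1 hres
      · -- pinch at the end of L
        obtain ⟨L₂, Q, rfl⟩ : ∃ L₂ Q, L = L₂ ++ [Q] := by
          rcases List.eq_nil_or_concat L with h | ⟨L₂, Q, h⟩
          · exact absurd h hLne
          · exact ⟨L₂, Q, by simpa [List.concat_eq_append] using h⟩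
        have hQlast : (L₂ ++ [Q]).getLast hLne = Q := List.getLast_concat
        rw [hQlast] at hA
        have hQ1 : ν = Q.1 := hA.1
        have haC : a ∈ toCsub Cm Cp ν := by
          rw [hQ1]
          exact (inv_mem_iff).1 hA.2
        have hd : t ^ ν * a * t ^ (-ν) ∈ toCsub Cm Cp (-ν) := pinch_mem hH hνpm haC
        have hdA : t ^ ν * a * t ^ (-ν) ∈ A := toCsub_le hH.1 hH.2.1 _ hd
        have hQA : Q.2 ∈ A := (hentL Q (by simp)).2
        set c : Γ := (t ^ ν * a * t ^ (-ν)) * Q.2⁻¹ with hcdef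
        have hcA : c ∈ A := mul_mem hdA (inv_mem hQA)
        set g₁ : Γ := (mulLastP g₀ w' c).1
        set w₁ : List (ℤ × Γ) := (mulLastP g₀ w' c).2
        have hgw : hnnProd t g₀ (w' ++ [(ν, a)]) * (Q.2 * t ^ Q.1)⁻¹ =
            hnnProd t g₁ w₁ := by
          rw [hnnProd_eq, hnnProd_eq, bprod_append]
          have := mulLastP_prod t g₀ c w'
          rw [this, hcdef, ← hQ1]
          simp only [bprod, List.map_cons, List.map_nil, List.prod_cons, List.prod_nil]
          group
        have hrot1 : blockProd t ((L₂ ++ [Q]).rotate L₂.length) =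
            (Q.2 * t ^ Q.1) * blockProd t L₂ := by
          have h1 : (L₂ ++ [Q]).rotate L₂.length =
              (L₂ ++ [Q]).drop L₂.length ++ (L₂ ++ [Q]).take L₂.length :=
            List.rotate_eq_drop_append_take (by simp)
          rw [h1, List.drop_left, List.take_left, blockProd_append, blockProd_cons]
          simp [blockProd]
        have heq2 : γ = hnnProd t g₁ w₁ * blockProd t ((L₂ ++ [Q]).rotate L₂.length) *
            (hnnProd t g₁ w₁)⁻¹ := by
          rw [← hgw, hrot1, heq, blockProd_append, blockProd_cons]
          simp only [blockProd, List.map_cons, List.map_nil, List.prod_cons, List.prod_nil]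
          group
        have hres := IH w₁.length
          (by
            have h1 : w₁.length = w'.length := mulLastP_length g₀ c w'
            omega)
          w₁ le_rfl g₁ (mulLastP_mem hg₀ hcA w') (mulLastP_ent hcA hentw')
          ((L₂ ++ [Q]).rotate L₂.length)
          (by simp [← List.length_pos_iff_ne_nil])
          (fun y hy => hentL y (List.mem_rotate.1 hy))
          (cycRed_rotate hcycL L₂.length) heq2
        exact rot_shift hLne L₂.length hres
    · -- remove a pinch from the conjugator word
      obtain ⟨g₁, w₁, hg₁, hent₁, hlen₁, hprod₁⟩ :=
        reduce_step hH w g₀ hg₀ hentw hch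
      have hwpos : 0 < w.length := List.length_pos_of_ne_nil hw
      exact IH w₁.length (by omega) w₁ le_rfl g₁ hg₁ hent₁ L hLne hentL hcycL
        (by rw [hprod₁]; exact heq)

end HNNAux

open HNNAux in
/-- Conjugation theorem in an HNN extension, case (iii): if the cyclically
reduced element `γ` is conjugate to a cyclically reduced element
`γ' = u₁ t^{μ₁} u₂ t^{μ₂} ⋯ u_m t^{μ_m}` with `m ≥ 1`, then `γ` is obtained by
conjugating some cyclic conjugate
`u_{r+1} t^{μ_{r+1}} ⋯ u_m t^{μ_m} u₁ t^{μ₁} ⋯ u_r t^{μ_r}` of `γ'` by an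
element of `C_{μ_r}`.  (Indices of `u`, `μ` are 0-based here.) -/
theorem hnn_conj_cyclic_conjugate (A Cm Cp : Subgroup Γ) (t : Γ)
    (hH : IsHNN A Cm Cp t) (γ : Γ)
    (hcyc : HNNCyclicallyReduced A Cm Cp t γ)
    (m : ℕ) (hm : 0 < m) (u : Fin m → Γ) (μ : Fin m → ℤ)
    (hu : ∀ i, u i ∈ A) (hμ : ∀ i, μ i = 1 ∨ μ i = -1)
    (hnopinch : ∀ i j : Fin m, (i : ℕ) + 1 = (j : ℕ) →
      μ j = -μ i → u j ∉ toCsub Cm Cp (μ i))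
    (hcycform : m = 1 ∨
      ¬(μ ⟨0, hm⟩ = -μ ⟨m - 1, by omega⟩ ∧
        u ⟨0, hm⟩ ∈ toCsub Cm Cp (μ ⟨m - 1, by omega⟩)))
    (hconj : ∃ g : Γ, γ = g * (List.ofFn fun i => u i * t ^ μ i).prod * g⁻¹) :
    ∃ r : Fin m, ∃ α ∈ toCsub Cm Cp (μ r),
      γ = α * ((List.ofFn fun i => u i * t ^ μ i).drop ((r : ℕ) + 1) ++
        (List.ofFn fun i => u i * t ^ μ i).take ((r : ℕ) + 1)).prod * α⁻¹ := by
  classical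
  set L : List (ℤ × Γ) := List.ofFn (fun i => (μ i, u i)) with hLdef
  have hLlen : L.length = m := by simp [hLdef]
  have hLne : L ≠ [] := by
    intro hc
    rw [hc] at hLlen
    simp at hLlen
    omega
  have hmapL : (List.ofFn fun i => u i * t ^ μ i) =
      L.map (fun p => p.2 * t ^ p.1) := by
    rw [hLdef, List.map_ofFn]
    rfl
  have hbp : (List.ofFn fun i => u i * t ^ μ i).prod = blockProd t L := by
    rw [hmapL]; rfl
  have hgetL0 : ∀ (r : ℕ) (hr : r < m), L[r]? = some (μ ⟨r, hr⟩, u ⟨r, hr⟩) := by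
    intro r hr
    rw [hLdef, List.getElem?_eq_getElem (by simpa using hr), List.getElem_ofFn]
  have hgetL : ∀ (r : ℕ) (hr : r < L.length), L.get ⟨r, hr⟩ =
      (μ ⟨r, by omega⟩, u ⟨r, by omega⟩) := by
    intro r hr
    have h1 := hgetL0 r (by omega)
    rw [List.getElem?_eq_getElem hr] at h1
    exact Option.some_inj.1 h1
  have hentL : Ent A L := by
    intro p hp
    rw [hLdef] at hp
    rw [List.mem_ofFn] at hp
    obtain ⟨i, hi⟩ := hp
    rw [← hi]
    exact ⟨hμ i, hu i⟩
  have hcycL : CycRed Cm Cp L := by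
    constructor
    · rw [List.Chain', List.isChain_iff_getElem]
      intro i hi
      rw [show L[i] = _ from hgetL i (by omega), show L[i+1] = _ from hgetL (i+1) (by omega)]
      intro hij
      have hlt : i + 1 < m := by omega
      exact hnopinch ⟨i, by omega⟩ ⟨i + 1, by omega⟩ rfl hij
    · intro p hp q hq
      have hplast : p = (μ ⟨m - 1, by omega⟩, u ⟨m - 1, by omega⟩) := by
        rw [List.getLast?_eq_getElem?, List.getElem?_eq_getElem (by omega : L.length - 1 < L.length)] at hp
        rw [show L[L.length - 1] = _ from hgetL (L.length - 1) (by omega)] at hp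
        simp only [hLlen] at hp
        simpa using hp.symm
      have hqhead : q = (μ ⟨0, hm⟩, u ⟨0, hm⟩) := by
        rw [List.head?_eq_getElem?, List.getElem?_eq_getElem (by omega : 0 < L.length)] at hq
        rw [show L[0] = _ from hgetL 0 (by omega)] at hq
        simpa using hq.symm
      subst hplast
      subst hqhead
      intro hcond hmem
      rcases hcycform with h1 | h2
      · subst h1
        have := hμ ⟨0, hm⟩
        have h0 : (⟨0, hm⟩ : Fin 1) = ⟨1 - 1, by omega⟩ := rfl
        rw [← h0] at hcond
        omega
      · exact h2 ⟨hcond, hmem⟩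
  obtain ⟨g, hg⟩ := hconj
  obtain ⟨g₀, w, hg₀, hentw, hprodw⟩ := gen_word hH g
  have heq : γ = hnnProd t g₀ w * blockProd t L * (hnnProd t g₀ w)⁻¹ := by
    rw [hprodw, ← hbp]
    exact hg
  obtain ⟨r, hr, α, hα, hγα⟩ :=
    main_lemma hH hcyc w.length w le_rfl g₀ hg₀ hentw L hLne hentL hcycL heq
  refine ⟨⟨r, by omega⟩, α, ?_, ?_⟩
  · rw [hgetL r hr] at hα
    exact hα
  · have hrle : r + 1 ≤ (List.ofFn fun i => u i * t ^ μ i).length := by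
      simp
      omega
    have hdt : (List.ofFn fun i => u i * t ^ μ i).drop (r + 1) ++
        (List.ofFn fun i => u i * t ^ μ i).take (r + 1) =
        (List.ofFn fun i => u i * t ^ μ i).rotate (r + 1) :=
      (List.rotate_eq_drop_append_take hrle).symm
    rw [hdt, hmapL, ← List.map_rotate]
    exact hγα
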